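/- Let S ⊂ ℝ^d be a finite set with S = −S, 0 ∉ S, S spanning ℝ^d, and S convexly independent. Then there exists a norm on ℝ^d whose unit ball is strictly convex such that every point of S has norm exactly 1 (i.e., there is a centrally symmetric strictly convex unit sphere passing through all points of S). -/

import Mathlib

open Pointwise Filter

noncomputable section

/-- A set in `ℝ^d` is convexly independent if no point of it lies in the
convex hull of the other points. -/
def ConvInd {d : ℕ} (S : Set (Fin d → ℝ)) : Prop :=
  ∀ p ∈ S, p ∉ convexHull ℝ (S \ {p})

/-- `Efun d n` : the maximum, over `n`-point sets `P ⊂ ℝ^d`, of the number of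
unordered pairs of distinct points of `P` whose midpoints are pairwise distinct
and form a convexly independent set.  Unordered pairs are encoded as ordered
pairs with the reversed pair excluded. -/
def Efun (d n : ℕ) : ℕ :=
  sSup {k | ∃ (P : Finset (Fin d → ℝ)) (T : Finset ((Fin d → ℝ) × (Fin d → ℝ))),
    P.card = n ∧
    (∀ e ∈ T, e.1 ∈ P ∧ e.2 ∈ P ∧ e.1 ≠ e.2 ∧ (e.2, e.1) ∉ T) ∧
    Set.InjOn (fun e : (Fin d → ℝ) × (Fin d → ℝ) => midpoint ℝ e.1 e.2) ↑T ∧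
    ConvInd ((fun e : (Fin d → ℝ) × (Fin d → ℝ) => midpoint ℝ e.1 e.2) '' ↑T) ∧
    T.card = k}

/-- `Mfun d m n` : the maximum, over `m`-point sets `P` and `n`-point sets `Q` in `ℝ^d`,
of the size of a convexly independent subset of the Minkowski sum `P + Q`. -/
def Mfun (d m n : ℕ) : ℕ :=
  sSup {k | ∃ P Q S : Finset (Fin d → ℝ),
    P.card = m ∧ Q.card = n ∧
    (S : Set (Fin d → ℝ)) ⊆ (P : Set (Fin d → ℝ)) + (Q : Set (Fin d → ℝ)) ∧
    ConvInd (S : Set (Fin d → ℝ)) ∧ S.card = k}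

/-- A norm on `ℝ^d` whose unit ball is strictly convex (the unit sphere contains
no nondegenerate segment, expressed via midpoints of distinct unit vectors). -/
structure StrictNorm (d : ℕ) where
  toFun : (Fin d → ℝ) → ℝ
  eq_zero_iff : ∀ x, toFun x = 0 ↔ x = 0
  smul_eq : ∀ (a : ℝ) (x : Fin d → ℝ), toFun (a • x) = |a| * toFun x
  add_le : ∀ x y, toFun (x + y) ≤ toFun x + toFun y
  strictly_convex : ∀ x y, toFun x = 1 → toFun y = 1 → x ≠ y →
    toFun ((1 / 2 : ℝ) • (x + y)) < 1

/-- A (not necessarily strictly convex) norm on `ℝ^d`. -/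
structure NormOn (d : ℕ) where
  toFun : (Fin d → ℝ) → ℝ
  eq_zero_iff : ∀ x, toFun x = 0 ↔ x = 0
  smul_eq : ∀ (a : ℝ) (x : Fin d → ℝ), toFun (a • x) = |a| * toFun x
  add_le : ∀ x y, toFun (x + y) ≤ toFun x + toFun y

/-- `Wfun d n` : the maximum, over `n`-point sets `S ⊂ ℝ^d` and strictly convex
norms on `ℝ^d`, of the number of pairwise nonparallel unit-distance pairs in `S`.
(The nonparallelity condition between distinct ordered pairs automatically rules
out listing any unordered pair twice.) -/
def Wfun (d n : ℕ) : ℕ :=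
  sSup {k | ∃ (S : Finset (Fin d → ℝ)) (ν : StrictNorm d)
      (T : Finset ((Fin d → ℝ) × (Fin d → ℝ))),
    S.card = n ∧
    (∀ e ∈ T, e.1 ∈ S ∧ e.2 ∈ S ∧ ν.toFun (e.1 - e.2) = 1) ∧
    (∀ e ∈ T, ∀ f ∈ T, e ≠ f → ∀ c : ℝ, e.1 - e.2 ≠ c • (f.1 - f.2)) ∧
    T.card = k}

/-- `Ufun d n` : the maximum, over `n`-point sets `S ⊂ ℝ^d` and strictly convex
norms on `ℝ^d`, of the number of unordered unit-distance pairs in `S`. -/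
def Ufun (d n : ℕ) : ℕ :=
  sSup {k | ∃ (S : Finset (Fin d → ℝ)) (ν : StrictNorm d)
      (T : Finset ((Fin d → ℝ) × (Fin d → ℝ))),
    S.card = n ∧
    (∀ e ∈ T, e.1 ∈ S ∧ e.2 ∈ S ∧ e.1 ≠ e.2 ∧ ν.toFun (e.1 - e.2) = 1 ∧ (e.2, e.1) ∉ T) ∧
    T.card = k}

/-- `Dfun d n` : the maximum, over `n`-point sets `S ⊂ ℝ^d` and strictly convex
norms on `ℝ^d`, of the number of unordered diameter pairs in `S` (pairs of points
whose distance equals the diameter `D` of `S` in the norm). -/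
def Dfun (d n : ℕ) : ℕ :=
  sSup {k | ∃ (S : Finset (Fin d → ℝ)) (ν : StrictNorm d)
      (T : Finset ((Fin d → ℝ) × (Fin d → ℝ))) (D : ℝ),
    S.card = n ∧
    (∀ p ∈ S, ∀ q ∈ S, ν.toFun (p - q) ≤ D) ∧
    (∃ p ∈ S, ∃ q ∈ S, ν.toFun (p - q) = D) ∧
    (∀ e ∈ T, e.1 ∈ S ∧ e.2 ∈ S ∧ e.1 ≠ e.2 ∧ ν.toFun (e.1 - e.2) = D ∧ (e.2, e.1) ∉ T) ∧
    T.card = k}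

/-- A family of sets in `ℝ^d` is strictly antipodal if for each pair of points
`p ∈ A i`, `q ∈ A j` with `i ≠ j` there is a linear functional `φ` with
`φ p < φ r < φ q` for every other point `r` of the union. -/
def StrictlyAntipodal {d : ℕ} {ι : Type*} (A : ι → Set (Fin d → ℝ)) : Prop :=
  ∀ i j, i ≠ j → ∀ p ∈ A i, ∀ q ∈ A j, ∃ φ : (Fin d → ℝ) →ₗ[ℝ] ℝ,
    ∀ r ∈ ⋃ t, A t, r ≠ p → r ≠ q → φ p < φ r ∧ φ r < φ q

/-- `aconst d` = `a(d)` : the largest `k` such that for every `m` there is a strictly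
antipodal family of `k` sets in `ℝ^d`, each of size at least `m`. -/
def aconst (d : ℕ) : ℕ :=
  sSup {k | ∀ m : ℕ, ∃ A : Fin k → Finset (Fin d → ℝ),
    (∀ i, m ≤ (A i).card) ∧ StrictlyAntipodal (fun i => ((A i : Set (Fin d → ℝ))))}

/-- The set of midpoints between points in different members of a family of finite sets. -/
def midSet {d : ℕ} {ι : Type*} (B : ι → Finset (Fin d → ℝ)) : Set (Fin d → ℝ) :=
  {x | ∃ i j, i ≠ j ∧ ∃ p ∈ B i, ∃ q ∈ B j, x = midpoint ℝ p q}

/-- The set of differences between points in different members of a family of sets. -/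
def diffSet {d : ℕ} {ι : Type*} (A : ι → Set (Fin d → ℝ)) : Set (Fin d → ℝ) :=
  {x | ∃ i j, i ≠ j ∧ ∃ p ∈ A i, ∃ q ∈ A j, x = p - q}


section AuxStrictNorm

open Metric Set
open scoped RealInnerProductSpace

theorem aux_main (d : ℕ) (S : Finset (Fin d → ℝ))
    (hsymm : ∀ p ∈ S, -p ∈ S) (h0 : (0 : Fin d → ℝ) ∉ S)
    (hS : S.Nonempty)
    (hconv : ∀ p ∈ S, p ∉ convexHull ℝ ((S : Set (Fin d → ℝ)) \ {p})) :
    ∃ ν : StrictNorm d, ∀ p ∈ S, ν.toFun p = 1 := by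
  classical
  set E := EuclideanSpace ℝ (Fin d)
  set L : (Fin d → ℝ) ≃L[ℝ] E := (EuclideanSpace.equiv (Fin d) ℝ).symm with hL
  -- Step 1: separating unit normals
  have hsep : ∀ p ∈ S, ∃ u : E, ‖u‖ = 1 ∧ 0 < ⟪u, L p⟫ ∧
      ∀ q ∈ S, q ≠ p → ⟪u, L q⟫ < ⟪u, L p⟫ := by
    intro p hp
    have hfin : ((S : Set (Fin d → ℝ)) \ {p}).Finite := S.finite_toSet.diff
    obtain ⟨f, t, hft, htf⟩ := geometric_hahn_banach_closed_point
      (convex_convexHull ℝ _) (hfin.isClosed_convexHull ℝ) (hconv p hp)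
    have hflt : ∀ q ∈ S, q ≠ p → f q < f p := by
      intro q hq hqp
      have : q ∈ convexHull ℝ ((S : Set (Fin d → ℝ)) \ {p}) :=
        subset_convexHull ℝ _ ⟨hq, hqp⟩
      exact lt_trans (hft q this) htf
    set w : E := (InnerProductSpace.toDual ℝ E).symm
      (f.comp (L.symm : E →L[ℝ] (Fin d → ℝ))) with hw
    have hwip : ∀ x : Fin d → ℝ, ⟪w, L x⟫ = f x := by
      intro x
      rw [hw, InnerProductSpace.toDual_symm_apply]
      simp
    have hpne : -p ≠ p := by
      intro h
      have h2 : (2:ℝ) • p = 0 := by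
        rw [two_smul]
        nth_rewrite 1 [← h]
        exact neg_add_cancel p
      rcases smul_eq_zero.mp h2 with h' | h'
      · norm_num at h'
      · exact h0 (h' ▸ hp)
    have hfp : 0 < f p := by
      have h1 := hflt (-p) (hsymm p hp) hpne
      have h2 : f (-p) = - f p := map_neg f p
      linarith
    have hw0 : w ≠ 0 := by
      intro h
      have h1 := hwip p
      rw [h] at h1
      simp only [inner_zero_left] at h1
      linarith
    have hwpos : (0:ℝ) < ‖w‖⁻¹ := inv_pos.2 (norm_pos_iff.mpr hw0)
    refine ⟨‖w‖⁻¹ • w, norm_smul_inv_norm hw0, ?_, ?_⟩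
    · rw [real_inner_smul_left, hwip]
      exact mul_pos hwpos hfp
    · intro q hq hqp
      rw [real_inner_smul_left, real_inner_smul_left, hwip, hwip]
      exact (mul_lt_mul_iff_right₀ hwpos).2 (hflt q hq hqp)
  choose! u hu1 hu2 hu3 using hsep
  -- Step 2: choose R
  obtain ⟨R, hR1, hR2, hR3⟩ : ∃ R : ℝ, 1 ≤ R ∧
      (∀ p ∈ S, ‖L p‖^2 < 2*R*⟪u p, L p⟫) ∧
      (∀ p ∈ S, ∀ q ∈ S, q ≠ p →
        ‖L q - L p‖^2 ≤ 2*R*⟪u p, L p⟫ - 2*R*⟪u p, L q⟫) := by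
    have h1 : ∀ᶠ R : ℝ in atTop, 1 ≤ R := eventually_ge_atTop 1
    have h2 : ∀ᶠ R : ℝ in atTop, ∀ p ∈ S, ‖L p‖^2 < 2*R*⟪u p, L p⟫ := by
      rw [S.eventually_all]
      intro p hp
      have hδ := hu2 p hp
      filter_upwards [eventually_gt_atTop (‖L p‖^2 / (2*⟪u p, L p⟫))] with R hR
      rw [div_lt_iff₀ (by positivity)] at hR
      nlinarith [hR]
    have h3 : ∀ᶠ R : ℝ in atTop, ∀ p ∈ S, ∀ q ∈ S, q ≠ p →
        ‖L q - L p‖^2 ≤ 2*R*⟪u p, L p⟫ - 2*R*⟪u p, L q⟫ := by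
      rw [S.eventually_all]
      intro p hp
      rw [S.eventually_all]
      intro q hq
      rcases eq_or_ne q p with rfl | hqp
      · exact Eventually.of_forall (fun R h => absurd rfl h)
      have hδ : 0 < ⟪u p, L p⟫ - ⟪u p, L q⟫ := sub_pos.2 (hu3 p hp q hq hqp)
      filter_upwards [eventually_ge_atTop
        (‖L q - L p‖^2 / (2*(⟪u p, L p⟫ - ⟪u p, L q⟫)))] with R hR _
      rw [div_le_iff₀ (by positivity)] at hR
      nlinarith [hR]
    exact ((h1.and (h2.and h3)).exists).imp (fun R h => ⟨h.1, h.2.1, h.2.2⟩)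
  have hR0 : (0:ℝ) < R := lt_of_lt_of_le one_pos hR1
  set c : (Fin d → ℝ) → E := fun p => L p - R • u p with hc
  -- expansion lemma
  have hexp : ∀ p ∈ S, ∀ q : Fin d → ℝ,
      ‖L q - c p‖^2 = ‖L q - L p‖^2 + 2*R*⟪u p, L q⟫ - 2*R*⟪u p, L p⟫ + R^2 := by
    intro p hp q
    have h1 : L q - c p = (L q - L p) + R • u p := by
      simp only [hc]; abel
    have e1 : ‖L q - c p‖^2 = ‖L q - L p‖^2 + 2*⟪L q - L p, R • u p⟫ + ‖R • u p‖^2 := by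
      rw [h1]; exact norm_add_sq_real _ _
    have e2 : ⟪L q - L p, R • u p⟫ = R * (⟪u p, L q⟫ - ⟪u p, L p⟫) := by
      rw [real_inner_smul_right, real_inner_comm, inner_sub_right]
    have e3 : ‖R • u p‖^2 = R^2 := by
      rw [norm_smul, hu1 p hp, Real.norm_eq_abs, abs_of_pos hR0]; ring
    rw [e1, e2, e3]; ring
  have hmemball : ∀ p ∈ S, ∀ q ∈ S, L q ∈ closedBall (c p) R := by
    intro p hp q hq
    rw [mem_closedBall, dist_eq_norm]
    rcases eq_or_ne q p with rfl | hqp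
    · have := hexp q hq q
      simp only [sub_self, norm_zero] at this
      nlinarith [norm_nonneg (L q - c q), this]
    · have h1 := hexp p hp q
      have h2 := hR3 p hp q hq hqp
      nlinarith [norm_nonneg (L q - c p)]
  have hzeroball : ∀ p ∈ S, (0:E) ∈ ball (c p) R := by
    intro p hp
    rw [mem_ball, dist_eq_norm]
    have h1 : ‖(0:E) - c p‖^2 = ‖L p‖^2 - 2*R*⟪u p, L p⟫ + R^2 := by
      have : (0:E) - c p = -(L p - R • u p) := by simp only [hc]; abel
      rw [this, norm_neg]
      have e1 : ‖L p - R • u p‖^2 = ‖L p‖^2 - 2*⟪L p, R • u p⟫ + ‖R • u p‖^2 := by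
        rw [sub_eq_add_neg, norm_add_sq_real, inner_neg_right, norm_neg]; ring
      have e2 : ⟪L p, R • u p⟫ = R * ⟪u p, L p⟫ := by
        rw [real_inner_smul_right, real_inner_comm]
      have e3 : ‖R • u p‖^2 = R^2 := by
        rw [norm_smul, hu1 p hp, Real.norm_eq_abs, abs_of_pos hR0]; ring
      rw [e1, e2, e3]; ring
    have h2 := hR2 p hp
    nlinarith [norm_nonneg ((0:E) - c p)]
  -- the body
  set B : Set E := (⋂ p ∈ S, closedBall (c p) R) ∩ (⋂ p ∈ S, closedBall (-(c p)) R) with hB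
  set U : Set E := (⋂ p ∈ S, ball (c p) R) ∩ (⋂ p ∈ S, ball (-(c p)) R) with hU
  have hUopen : IsOpen U := by
    refine IsOpen.inter ?_ ?_ <;> exact isOpen_biInter_finset (fun p _ => isOpen_ball)
  have hUB : U ⊆ B := by
    refine inter_subset_inter ?_ ?_ <;>
      exact iInter₂_mono (fun p hp => ball_subset_closedBall)
  have h0U : (0:E) ∈ U := by
    constructor
    · exact mem_iInter₂.2 (fun p hp => hzeroball p hp)
    · refine mem_iInter₂.2 (fun p hp => ?_)
      have h := hzeroball p hp
      rw [mem_ball, dist_eq_norm] at h ⊢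
      simp only [zero_sub, norm_neg] at h ⊢
      exact h
  have hBnhds : B ∈ nhds (0:E) := Filter.mem_of_superset (hUopen.mem_nhds h0U) hUB
  have hBconv : Convex ℝ B := by
    refine Convex.inter ?_ ?_ <;>
      exact convex_iInter (fun p => convex_iInter (fun hp => convex_closedBall _ _))
  have hBclosed : IsClosed B := by
    refine IsClosed.inter ?_ ?_ <;>
      exact isClosed_iInter (fun p => isClosed_iInter (fun hp => Metric.isClosed_closedBall))
  have hBsymm : ∀ x ∈ B, -x ∈ B := by
    rintro x ⟨hx1, hx2⟩
    constructor
    · refine mem_iInter₂.2 (fun p hp => ?_)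
      have := mem_iInter₂.1 hx2 p hp
      rw [mem_closedBall] at this ⊢
      rwa [← dist_neg_neg, neg_neg] at this
    · refine mem_iInter₂.2 (fun p hp => ?_)
      have := mem_iInter₂.1 hx1 p hp
      rw [mem_closedBall] at this ⊢
      rwa [← dist_neg_neg x (c p)] at this
  have hSB : ∀ p ∈ S, L p ∈ B := by
    intro p hp
    constructor
    · exact mem_iInter₂.2 (fun q hq => hmemball q hq p hp)
    · refine mem_iInter₂.2 (fun q hq => ?_)
      have := hmemball q hq (-p) (hsymm p hp)
      rw [mem_closedBall] at this ⊢
      rw [map_neg] at this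
      rwa [← dist_neg_neg, neg_neg] at this
  have habs : Absorbent ℝ B := absorbent_nhds_zero hBnhds
  have hBbd : Bornology.IsVonNBounded ℝ B := by
    obtain ⟨p₀, hp₀⟩ := hS
    refine (NormedSpace.isVonNBounded_closedBall ℝ E (‖c p₀‖ + R)).subset ?_
    rintro x ⟨hx1, _⟩
    have := mem_iInter₂.1 hx1 p₀ hp₀
    rw [mem_closedBall] at this ⊢
    calc dist x 0 ≤ dist x (c p₀) + dist (c p₀) 0 := dist_triangle _ _ _
    _ ≤ R + ‖c p₀‖ := by rw [dist_zero_right]; linarith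
    _ = ‖c p₀‖ + R := by ring
  have hdistp : ∀ p ∈ S, ‖L p - c p‖ = R := by
    intro p hp
    have : L p - c p = R • u p := by simp only [hc]; abel
    rw [this, norm_smul, hu1 p hp, Real.norm_eq_abs, abs_of_pos hR0, mul_one]
  -- gauge equals one on S
  have hgauge1 : ∀ p ∈ S, gauge B (L p) = 1 := by
    intro p hp
    refine le_antisymm (gauge_le_one_of_mem (hSB p hp)) ?_
    by_contra h
    push_neg at h
    obtain ⟨b, hb0, hb1, hmem⟩ := exists_lt_of_gauge_lt habs h
    obtain ⟨z, hz, hbz⟩ := hmem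
    have hzB : z ∈ B := hz
    have hsup : ⟪u p, z⟫ ≤ ⟪u p, L p⟫ := by
      have hz1 : z ∈ closedBall (c p) R := mem_iInter₂.1 hzB.1 p hp
      rw [mem_closedBall, dist_eq_norm] at hz1
      have h5 : ⟪u p, z - c p⟫ ≤ R := by
        calc ⟪u p, z - c p⟫ ≤ ‖u p‖ * ‖z - c p‖ := real_inner_le_norm _ _
        _ ≤ 1 * R := by rw [hu1 p hp]; simpa using hz1
        _ = R := one_mul R
      have h6 : ⟪u p, c p⟫ = ⟪u p, L p⟫ - R := by
        rw [hc]
        simp only [inner_sub_right, real_inner_smul_right]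
        rw [real_inner_self_eq_norm_sq, hu1 p hp]
        ring
      have h7 : ⟪u p, z⟫ = ⟪u p, z - c p⟫ + ⟪u p, c p⟫ := by
        rw [inner_sub_right]; ring
      linarith
    have hip : ⟪u p, L p⟫ = b * ⟪u p, z⟫ := by
      rw [← hbz, real_inner_smul_right]
    have hpos := hu2 p hp
    nlinarith [hsup, hip, hpos, hb0, hb1]
  -- strict convexity of the gauge
  have hmidpt : ∀ x y : E, x ∈ B → y ∈ B → x ≠ y →
      gauge B ((1/2 : ℝ) • (x + y)) < 1 := by
    intro x y hx hy hxy
    rw [gauge_lt_one_iff_mem_interior hBconv hBnhds]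
    have hmem : (1/2 : ℝ) • (x + y) ∈ U := by
      have key : ∀ γ : E, x ∈ closedBall γ R → y ∈ closedBall γ R →
          (1/2 : ℝ) • (x + y) ∈ ball γ R := by
        intro γ hxγ hyγ
        have := (strictConvex_closedBall ℝ γ R) hxγ hyγ hxy
          (by norm_num : (0:ℝ) < 1/2) (by norm_num : (0:ℝ) < 1/2) (by norm_num)
        rw [interior_closedBall γ (ne_of_gt hR0)] at this
        rwa [smul_add]
      constructor
      · exact mem_iInter₂.2 (fun p hp =>
          key (c p) (mem_iInter₂.1 hx.1 p hp) (mem_iInter₂.1 hy.1 p hp))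
      · exact mem_iInter₂.2 (fun p hp =>
          key (-(c p)) (mem_iInter₂.1 hx.2 p hp) (mem_iInter₂.1 hy.2 p hp))
    exact interior_maximal hUB hUopen hmem
  -- the norm
  refine ⟨⟨fun x => gauge B (L x), ?_, ?_, ?_, ?_⟩, fun p hp => hgauge1 p hp⟩
  · intro x
    show gauge B (L x) = 0 ↔ x = 0
    constructor
    · intro h
      have h1 := (gauge_eq_zero habs hBbd).1 h
      have hx0 : L x = L 0 := by rw [map_zero]; exact h1
      exact L.injective hx0
    · rintro rfl
      rw [map_zero, gauge_zero]
  · intro a x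
    show gauge B (L (a • x)) = |a| * gauge B (L x)
    rcases le_or_gt 0 a with ha | ha
    · rw [map_smul, gauge_smul_of_nonneg ha, smul_eq_mul, abs_of_nonneg ha]
    · rw [map_smul]
      have h1 : a • L x = -((-a) • L x) := by rw [neg_smul, neg_neg]
      rw [h1, gauge_neg hBsymm, gauge_smul_of_nonneg (neg_nonneg.2 ha.le), smul_eq_mul,
        abs_of_neg ha]
  · intro x y
    show gauge B (L (x + y)) ≤ gauge B (L x) + gauge B (L y)
    rw [map_add]
    exact gauge_add_le hBconv habs _ _
  · intro x y hx hy hxy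
    show gauge B (L ((1/2 : ℝ) • (x + y))) < 1
    have hx' : gauge B (L x) = 1 := hx
    have hy' : gauge B (L y) = 1 := hy
    have hxB : L x ∈ B := by
      have h1 := (gauge_le_one_iff_mem_closure hBconv hBnhds).1 (le_of_eq hx')
      rwa [hBclosed.closure_eq] at h1
    have hyB : L y ∈ B := by
      have h1 := (gauge_le_one_iff_mem_closure hBconv hBnhds).1 (le_of_eq hy')
      rwa [hBclosed.closure_eq] at h1
    have hLxy : L x ≠ L y := fun h => hxy (L.injective h)
    rw [map_smul, map_add]
    exact hmidpt (L x) (L y) hxB hyB hLxy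

end AuxStrictNorm

/-- If `S ⊂ ℝ^d` is finite, symmetric (`S = -S`), avoids the origin, spans `ℝ^d` and is
convexly independent, then there is a strictly convex norm on `ℝ^d` whose unit sphere
passes through every point of `S`. -/
theorem exists_strict_norm_through (d : ℕ) (S : Finset (Fin d → ℝ))
    (hsymm : ∀ p ∈ S, -p ∈ S) (h0 : (0 : Fin d → ℝ) ∉ S)
    (hspan : Submodule.span ℝ (S : Set (Fin d → ℝ)) = ⊤)
    (hconv : ConvInd (S : Set (Fin d → ℝ))) :
    ∃ ν : StrictNorm d, ∀ p ∈ S, ν.toFun p = 1 := by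
  rcases S.eq_empty_or_nonempty with rfl | hS
  · have htriv : ∀ x : Fin d → ℝ, x = 0 := by
      intro x
      have hx : x ∈ Submodule.span ℝ ((∅ : Finset (Fin d → ℝ)) : Set (Fin d → ℝ)) :=
        hspan.symm ▸ Submodule.mem_top
      simpa [Finset.coe_empty, Submodule.span_empty, Submodule.mem_bot] using hx
    refine ⟨⟨fun _ => 0, fun x => ⟨fun _ => htriv x, fun _ => rfl⟩, ?_, ?_, ?_⟩, ?_⟩
    · intro a x; simp
    · intro x y; norm_num
    · intro x y h1 h2 h3
      norm_num at h1
    · intro p hp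
      simp at hp
  · exact aux_main d S hsymm h0 hS (fun p hp => hconv p hp)
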